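/- In an unbalanced configuration of n clients on m servers in phase v (maximum load equal to v with ⌈n/m⌉ ≤ v ≤ ⌈n/(m−1)⌉), the number A of servers with at most v−2 clients satisfies A ≥ max{m − n/(v−1), 1}. -/
import Mathlib


theorem light_servers_lower_bound (m n v : ℕ) (hm : 2 ≤ m) (hv : 2 ≤ v)
    (N : Fin m → ℕ) (hsum : ∑ i, N i = n)
    (hmax : ∀ i, N i ≤ v) (hattained : ∃ i, N i = v)
    (hunbal : ∃ i j : Fin m, N j + 2 ≤ N i)
    (hceil_lo : (⌈(n : ℚ) / m⌉₊ : ℕ) ≤ v)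
    (hceil_hi : v ≤ (⌈(n : ℚ) / (m - 1 : ℚ)⌉₊ : ℕ)) :
    ((Finset.univ.filter (fun i => (N i : ℤ) ≤ (v : ℤ) - 2)).card : ℝ) ≥
      max ((m : ℝ) - (n : ℝ) / ((v : ℝ) - 1)) 1 := by
  set S := Finset.univ.filter (fun i => (N i : ℤ) ≤ (v : ℤ) - 2) with hS
  have hA1 : 1 ≤ S.card := by
    obtain ⟨i, j, hij⟩ := hunbal
    have hj : j ∈ S := by
      simp only [hS, Finset.mem_filter, Finset.mem_univ, true_and]
      have := hmax i
      omega
    exact Finset.card_pos.mpr ⟨j, hj⟩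
  have hAm : S.card ≤ m := by
    simpa using Finset.card_le_univ S
  have hcompl : (m - S.card) * (v - 1) ≤ n := by
    have h1 : ∀ i ∈ Sᶜ, v - 1 ≤ N i := by
      intro i hi
      simp only [hS, Finset.mem_compl, Finset.mem_filter, Finset.mem_univ, true_and,
        not_le] at hi
      omega
    calc (m - S.card) * (v - 1) = Sᶜ.card * (v - 1) := by
          rw [Finset.card_compl]; simp
      _ ≤ ∑ i ∈ Sᶜ, N i := by
          simpa using Finset.card_nsmul_le_sum Sᶜ N (v - 1) h1
      _ ≤ ∑ i, N i := Finset.sum_le_sum_of_subset (Finset.subset_univ _)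
      _ = n := hsum
  rw [ge_iff_le, max_le_iff]
  have hv1 : (0 : ℝ) < (v : ℝ) - 1 := by
    have : (2 : ℝ) ≤ (v : ℝ) := by exact_mod_cast hv
    linarith
  constructor
  · have hreal : ((m : ℝ) - S.card) * ((v : ℝ) - 1) ≤ (n : ℝ) := by
      have := hcompl
      have h2 : ((m - S.card : ℕ) : ℝ) * (((v - 1 : ℕ)) : ℝ) ≤ (n : ℝ) := by
        exact_mod_cast this
      rw [Nat.cast_sub hAm, Nat.cast_sub (by omega : 1 ≤ v)] at h2
      simpa using h2
    have h3 : (m : ℝ) - S.card ≤ (n : ℝ) / ((v : ℝ) - 1) := by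
      rw [le_div_iff₀ hv1]; linarith
    linarith
  · exact_mod_cast hA1
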